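/- Let α = 2^{−1/2}. For every integer m ≥ 0 there exist constants C̃_m, C_m > 0, depending only on m, with the following property: whenever a pair of real polynomials (P_{−1}, P₀) has a (1,1)-regular ρ-germ at some x₀ ∈ ℝ (for some ρ > 0), and P_k, Q_k, Δ_k are defined from this germ as below, then for every k ≥ 2m + 1 and every x ∈ [−2^{m−1}π, 2^{m−1}π], |Δ_k(x)| ≤ C̃_m · α^k · |x|³ ≤ C_m · α^k. -/

import Mathlib

open Polynomial

/-- The Thue–Morse iteration of a polynomial pair; `tmSeq Pm1 P0 (k+1)` is `P_k`,
so `tmSeq Pm1 P0 0 = P_{-1}` and `tmSeq Pm1 P0 1 = P₀`. -/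
noncomputable def tmSeq (Pm1 P0 : Polynomial ℝ) : ℕ → Polynomial ℝ
  | 0 => Pm1
  | 1 => P0
  | (n + 2) => (tmSeq Pm1 P0 n) ^ 2 * (tmSeq Pm1 P0 (n + 1) - 2) + 2

/-- `tmDelta Pm1 P0 x₀ ρ (k+1) = Δ_k`, where
`Δ_k x = Q_k x - 2 cos x` and `Q_k x = P_k (x / (2 ^ k ρ) + x₀)`. -/
noncomputable def tmDelta (Pm1 P0 : Polynomial ℝ) (x₀ ρ : ℝ) (j : ℕ) (x : ℝ) : ℝ :=
  (tmSeq Pm1 P0 j).eval (x / ((2 : ℝ) ^ ((j : ℤ) - 1) * ρ) + x₀) - 2 * Real.cos x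

/-- `tmCoeff Pm1 P0 x₀ ρ (k+1) n = Δ_{k,n}`, the `n`-th Taylor coefficient of
`Δ_k` at `0`. -/
noncomputable def tmCoeff (Pm1 P0 : Polynomial ℝ) (x₀ ρ : ℝ) (j : ℕ) (n : ℕ) : ℝ :=
  iteratedDeriv n (tmDelta Pm1 P0 x₀ ρ j) 0 / (n.factorial : ℝ)

/-- The pair `(Pm1, P0)` has a `ρ`-germ at `x₀`. -/
def HasGermAt (Pm1 P0 : Polynomial ℝ) (ρ x₀ : ℝ) : Prop :=
  0 < ρ ∧
  Pm1.eval x₀ = 2 ∧ (derivative Pm1).eval x₀ = 0 ∧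
    (derivative (derivative Pm1)).eval x₀ = -ρ ^ 2 / 2 ∧
  P0.eval x₀ = 2 ∧ (derivative P0).eval x₀ = 0 ∧
    (derivative (derivative P0)).eval x₀ = -(2 * ρ ^ 2)

/-- The pair `(Pm1, P0)` has a `(δ, β)`-regular `ρ`-germ at `x₀`:
a `ρ`-germ together with the bounds `|Δ_{-1,n}| ≤ δ / β ^ n` and
`|Δ_{0,n}| ≤ δ / β ^ n` for all `n ≥ 3`. -/
def IsRegularGermAt (Pm1 P0 : Polynomial ℝ) (δ β ρ x₀ : ℝ) : Prop :=
  HasGermAt Pm1 P0 ρ x₀ ∧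
  ∀ n : ℕ, 3 ≤ n →
    |tmCoeff Pm1 P0 x₀ ρ 0 n| ≤ δ / β ^ n ∧ |tmCoeff Pm1 P0 x₀ ρ 1 n| ≤ δ / β ^ n

/- ### Auxiliary lemmas -/

lemma tmDelta_rec (Pm1 P0 : Polynomial ℝ) (x₀ ρ : ℝ) (j : ℕ) (x : ℝ) :
    tmDelta Pm1 P0 x₀ ρ (j + 2) x =
      (2 * Real.cos (x/4)) ^ 2 * tmDelta Pm1 P0 x₀ ρ (j+1) (x/2) +
      (2 * (2 * Real.cos (x/4)) * tmDelta Pm1 P0 x₀ ρ j (x/4)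
        + (tmDelta Pm1 P0 x₀ ρ j (x/4)) ^ 2) *
        ((2 * Real.cos (x/2) - 2) + tmDelta Pm1 P0 x₀ ρ (j+1) (x/2)) := by
  have e1 : (x/4) / ((2 : ℝ) ^ ((j : ℤ) - 1) * ρ) = x / ((2 : ℝ) ^ (((j:ℤ)+2) - 1) * ρ) := by
    have : (2 : ℝ) ^ (((j:ℤ)+2) - 1) = 4 * (2 : ℝ) ^ ((j : ℤ) - 1) := by
      rw [show ((j:ℤ)+2) - 1 = ((j:ℤ) - 1) + 2 by ring, zpow_add₀ (by norm_num : (2:ℝ) ≠ 0)]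
      ring
    rw [this]; ring
  have e2 : (x/2) / ((2 : ℝ) ^ (((j:ℤ)+1) - 1) * ρ) = x / ((2 : ℝ) ^ (((j:ℤ)+2) - 1) * ρ) := by
    have : (2 : ℝ) ^ (((j:ℤ)+2) - 1) = 2 * (2 : ℝ) ^ (((j:ℤ)+1) - 1) := by
      rw [show ((j:ℤ)+2) - 1 = (((j:ℤ)+1) - 1) + 1 by ring, zpow_add₀ (by norm_num : (2:ℝ) ≠ 0)]
      ring
    rw [this]; ring
  have hc2 : Real.cos (x/2) = 2 * Real.cos (x/4) ^ 2 - 1 := by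
    rw [show x/2 = 2 * (x/4) by ring, Real.cos_two_mul]
  have hcx : Real.cos x = 2 * Real.cos (x/2) ^ 2 - 1 := by
    conv_lhs => rw [show x = 2 * (x/2) by ring]
    rw [Real.cos_two_mul]
  simp only [tmDelta, tmSeq]
  push_cast
  rw [e1, e2]
  simp only [eval_add, eval_mul, eval_pow, eval_sub, eval_ofNat]
  rw [hcx, hc2]
  ring

lemma iterDeriv_polyCos (q : Polynomial ℝ) (n : ℕ) :
    iteratedDeriv n (fun x => q.eval x - 2 * Real.cos x) =
      fun x => (derivative^[n] q).eval x - 2 * Real.cos (x + n * (Real.pi/2)) := by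
  induction n with
  | zero => simp
  | succ n ih =>
    rw [iteratedDeriv_succ, ih]
    funext x
    have h1 : HasDerivAt (fun x : ℝ => (derivative^[n] q).eval x)
        ((derivative^[n+1] q).eval x) x := by
      rw [Function.iterate_succ_apply']
      exact (derivative^[n] q).hasDerivAt x
    have h2 : HasDerivAt (fun x : ℝ => 2 * Real.cos (x + n * (Real.pi/2)))
        (2 * Real.cos (x + (n+1) * (Real.pi/2))) x := by
      have : HasDerivAt (fun x : ℝ => Real.cos (x + n * (Real.pi/2)))
          (-Real.sin (x + n * (Real.pi/2))) x := by
        have := (Real.hasDerivAt_cos (x + n * (Real.pi/2))).comp x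
          ((hasDerivAt_id x).add_const (n * (Real.pi/2)))
        rw [mul_one] at this
        exact this
      have h3 := this.const_mul (2:ℝ)
      have e : (2:ℝ) * Real.cos (x + ((n:ℝ)+1) * (Real.pi/2))
          = 2 * -Real.sin (x + n * (Real.pi/2)) := by
        rw [show x + ((n:ℝ)+1) * (Real.pi/2) = (x + (n:ℝ) * (Real.pi/2)) + Real.pi/2 by ring,
          Real.cos_add_pi_div_two]
      rw [e]
      exact h3
    have := (h1.sub h2).deriv
    simpa [Nat.cast_add, Pi.sub_def] using this

/-- The polynomial whose evaluation gives `Q_k`. -/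
noncomputable def tmQ (Pm1 P0 : Polynomial ℝ) (x₀ ρ : ℝ) (j : ℕ) : Polynomial ℝ :=
  (tmSeq Pm1 P0 j).comp (C x₀ + C ((2 : ℝ) ^ ((j : ℤ) - 1) * ρ)⁻¹ * X)

lemma tmDelta_eq (Pm1 P0 : Polynomial ℝ) (x₀ ρ : ℝ) (j : ℕ) :
    tmDelta Pm1 P0 x₀ ρ j = fun x => (tmQ Pm1 P0 x₀ ρ j).eval x - 2 * Real.cos x := by
  funext x
  simp only [tmDelta, tmQ, eval_comp, eval_add, eval_mul, eval_C, eval_X]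
  rw [div_eq_mul_inv]
  ring_nf

lemma cos_nat_pi : ∀ i : ℕ, Real.cos (i * Real.pi) = (-1 : ℝ)^i := by
  intro i
  simpa using Real.cos_nat_mul_pi_sub 0 i

lemma cos_odd_pi_div_two (i : ℕ) : Real.cos ((2*i+1 : ℕ) * (Real.pi/2)) = 0 := by
  push_cast
  rw [show ((2*(i:ℝ)+1)) * (Real.pi/2) = (i:ℝ) * Real.pi + Real.pi/2 by ring,
    Real.cos_add_pi_div_two, Real.sin_nat_mul_pi]
  ring

lemma tmCoeff_eq (Pm1 P0 : Polynomial ℝ) (x₀ ρ : ℝ) (j : ℕ) (n : ℕ) :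
    tmCoeff Pm1 P0 x₀ ρ j n =
      (tmQ Pm1 P0 x₀ ρ j).coeff n - 2 * (Real.cos (n * (Real.pi/2)) / n.factorial) := by
  have hfac : (n.factorial : ℝ) ≠ 0 := Nat.cast_ne_zero.2 n.factorial_ne_zero
  rw [tmCoeff, tmDelta_eq, iterDeriv_polyCos]
  have h2 : ((derivative^[n] (tmQ Pm1 P0 x₀ ρ j)).eval 0)
      = (n.factorial : ℝ) * (tmQ Pm1 P0 x₀ ρ j).coeff n := by
    rw [← coeff_zero_eq_eval_zero, Polynomial.coeff_iterate_derivative]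
    simp [Nat.descFactorial_self, nsmul_eq_mul]
  simp only [zero_add]
  rw [h2]
  field_simp

lemma hasSum_tmDelta (Pm1 P0 : Polynomial ℝ) (x₀ ρ : ℝ) (j : ℕ) (x : ℝ) :
    HasSum (fun n => tmCoeff Pm1 P0 x₀ ρ j n * x ^ n) (tmDelta Pm1 P0 x₀ ρ j x) := by
  set q := tmQ Pm1 P0 x₀ ρ j with hq
  have hp : HasSum (fun n => q.coeff n * x ^ n) (q.eval x) := by
    have h0 : ∀ n ∉ Finset.range (q.natDegree + 1), q.coeff n * x ^ n = 0 := by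
      intro n hn
      rw [Finset.mem_range, not_lt] at hn
      rw [coeff_eq_zero_of_natDegree_lt (by omega), zero_mul]
    have : HasSum (fun n => q.coeff n * x ^ n)
        (∑ n ∈ Finset.range (q.natDegree + 1), q.coeff n * x ^ n) :=
      hasSum_sum_of_ne_finset_zero h0
    rwa [← eval_eq_sum_range] at this
  have hc : HasSum (fun n : ℕ => 2 * (Real.cos (n * (Real.pi/2)) / n.factorial) * x ^ n)
      (2 * Real.cos x) := by
    have hcos := (Real.hasSum_cos x).mul_left 2
    have hinj : Function.Injective (fun i : ℕ => 2 * i) := fun a b h => by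
      simp only [] at h; omega
    have hoff : ∀ n ∉ Set.range (fun i : ℕ => 2 * i),
        2 * (Real.cos (n * (Real.pi/2)) / n.factorial) * x ^ n = 0 := by
      intro n hn
      have hrng : ∀ i : ℕ, 2 * i ≠ n := by
        intro i hi; exact hn ⟨i, hi⟩
      obtain ⟨i, rfl⟩ : ∃ i, n = 2*i+1 := ⟨n/2, by have h := hrng (n/2); omega⟩
      rw [cos_odd_pi_div_two]
      ring
    refine (Function.Injective.hasSum_iff hinj hoff).mp ?_
    have hfun : ((fun n : ℕ => 2 * (Real.cos (n * (Real.pi/2)) / n.factorial) * x ^ n) ∘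
        (fun i : ℕ => 2 * i)) =
        fun i : ℕ => 2 * ((-1 : ℝ) ^ i * x ^ (2 * i) / ((2 * i).factorial : ℝ)) := by
      funext i
      simp only [Function.comp]
      rw [show ((2*i : ℕ) : ℝ) * (Real.pi/2) = (i : ℝ) * Real.pi by push_cast; ring,
        cos_nat_pi]
      push_cast
      ring
    rw [hfun]
    exact hcos
  have := hp.sub hc
  rw [tmDelta_eq]
  have hfun : (fun n => tmCoeff Pm1 P0 x₀ ρ j n * x ^ n) =
      fun n : ℕ => q.coeff n * x ^ n - 2 * (Real.cos (n * (Real.pi/2)) / n.factorial) * x ^ n := by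
    funext n
    rw [tmCoeff_eq]
    ring
  rw [hfun]
  exact this

lemma aff_deriv (x₀ b : ℝ) : derivative (C x₀ + C b * X) = C b := by
  simp

lemma comp_coeff0 (p : Polynomial ℝ) (x₀ b : ℝ) :
    (p.comp (C x₀ + C b * X)).coeff 0 = p.eval (x₀) := by
  rw [coeff_zero_eq_eval_zero, eval_comp]
  simp

lemma comp_coeff1 (p : Polynomial ℝ) (x₀ b : ℝ) :
    (p.comp (C x₀ + C b * X)).coeff 1 = b * (derivative p).eval x₀ := by
  have h := coeff_derivative (p.comp (C x₀ + C b * X)) 0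
  rw [derivative_comp, aff_deriv] at h
  have h2 : (C b * (derivative p).comp (C x₀ + C b * X)).coeff 0
      = b * (derivative p).eval x₀ := by
    rw [coeff_zero_eq_eval_zero, eval_mul, eval_C, eval_comp]
    simp
  rw [h2] at h
  push_cast at h
  linarith [h]

lemma comp_coeff2 (p : Polynomial ℝ) (x₀ b : ℝ) :
    (p.comp (C x₀ + C b * X)).coeff 2
      = b^2 * (derivative (derivative p)).eval x₀ / 2 := by
  set u := C x₀ + C b * X with hu
  have hdQ : derivative (p.comp u) = C b * (derivative p).comp u := by
    rw [derivative_comp, hu, aff_deriv]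
  have hddQ : derivative (derivative (p.comp u))
      = C b * (C b * ((derivative (derivative p)).comp u)) := by
    rw [hdQ, derivative_C_mul, derivative_comp, hu, aff_deriv]
  have h0 := coeff_derivative (derivative (p.comp u)) 0
  have h1 := coeff_derivative (p.comp u) 1
  have hv : (derivative (derivative (p.comp u))).coeff 0
      = b * (b * (derivative (derivative p)).eval x₀) := by
    rw [hddQ, coeff_zero_eq_eval_zero]
    simp [hu]
  rw [hv] at h0
  push_cast at h0 h1
  nlinarith [h0, h1]

lemma tmCoeff_low (Pm1 P0 : Polynomial ℝ) (x₀ ρ : ℝ) (h : HasGermAt Pm1 P0 ρ x₀)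
    (j : ℕ) (hj : j ≤ 1) (n : ℕ) (hn : n < 3) : tmCoeff Pm1 P0 x₀ ρ j n = 0 := by
  obtain ⟨hρ, h1, h2, h3, h4, h5, h6⟩ := h
  have hρ' : ρ ≠ 0 := ne_of_gt hρ
  have e0 : ∀ j, (tmQ Pm1 P0 x₀ ρ j).coeff 0 = (tmSeq Pm1 P0 j).eval x₀ :=
    fun j => comp_coeff0 _ _ _
  have e1 : ∀ j, (tmQ Pm1 P0 x₀ ρ j).coeff 1
      = ((2 : ℝ) ^ ((j : ℤ) - 1) * ρ)⁻¹ * (derivative (tmSeq Pm1 P0 j)).eval x₀ :=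
    fun j => comp_coeff1 _ _ _
  have e2 : ∀ j, (tmQ Pm1 P0 x₀ ρ j).coeff 2
      = (((2 : ℝ) ^ ((j : ℤ) - 1) * ρ)⁻¹)^2
          * (derivative (derivative (tmSeq Pm1 P0 j))).eval x₀ / 2 :=
    fun j => comp_coeff2 _ _ _
  have hs0 : tmSeq Pm1 P0 0 = Pm1 := rfl
  have hs1 : tmSeq Pm1 P0 1 = P0 := rfl
  interval_cases j <;> interval_cases n <;>
    rw [tmCoeff_eq] <;>
    simp only [e0, e1, e2, hs0, hs1, h1, h2, h3, h4, h5, h6]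
  · norm_num
  · norm_num [Real.cos_pi_div_two]
  · rw [show ((2:ℕ):ℝ) * (Real.pi/2) = Real.pi by push_cast; ring, Real.cos_pi]
    push_cast
    norm_num
    field_simp
    ring
  · norm_num
  · norm_num [Real.cos_pi_div_two]
  · rw [show ((2:ℕ):ℝ) * (Real.pi/2) = Real.pi by push_cast; ring, Real.cos_pi]
    push_cast
    norm_num
    field_simp
    ring


lemma base_bound (Pm1 P0 : Polynomial ℝ) (x₀ ρ : ℝ)
    (hreg : IsRegularGermAt Pm1 P0 1 1 ρ x₀) (j : ℕ) (hj : j ≤ 1)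
    (x : ℝ) (hx : |x| ≤ Real.pi/4) :
    |tmDelta Pm1 P0 x₀ ρ j x| ≤ 5 * |x|^3 := by
  have hpi : Real.pi ≤ 3.15 := Real.pi_lt_d2.le
  have hx8 : |x| ≤ 0.7875 := by linarith
  have hx1 : |x| < 1 := lt_of_le_of_lt hx8 (by norm_num)
  have hcb : ∀ n : ℕ, 3 ≤ n → |tmCoeff Pm1 P0 x₀ ρ j n| ≤ 1 := by
    intro n hn
    have h := hreg.2 n hn
    interval_cases j
    · simpa using h.1
    · simpa using h.2
  have hlow : ∀ n : ℕ, n < 3 → tmCoeff Pm1 P0 x₀ ρ j n = 0 :=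
    fun n hn => tmCoeff_low Pm1 P0 x₀ ρ hreg.1 j hj n hn
  have hinj : Function.Injective (fun i : ℕ => i + 3) := fun a b h => by
    simp only [] at h; omega
  have hoff : ∀ n ∉ Set.range (fun i : ℕ => i + 3),
      tmCoeff Pm1 P0 x₀ ρ j n * x ^ n = 0 := by
    intro n hn
    have : n < 3 := by
      by_contra h
      exact hn ⟨n - 3, by show n - 3 + 3 = n; omega⟩
    rw [hlow n this, zero_mul]
  have hshift : HasSum ((fun n => tmCoeff Pm1 P0 x₀ ρ j n * x ^ n) ∘ (fun i : ℕ => i + 3))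
      (tmDelta Pm1 P0 x₀ ρ j x) :=
    (Function.Injective.hasSum_iff hinj hoff).mpr (hasSum_tmDelta Pm1 P0 x₀ ρ j x)
  have hg : HasSum (fun n : ℕ => |x|^3 * |x|^n) (|x|^3 * (1 - |x|)⁻¹) :=
    (hasSum_geometric_of_lt_one (abs_nonneg x) hx1).mul_left _
  have hbd : ‖tmDelta Pm1 P0 x₀ ρ j x‖ ≤ |x|^3 * (1 - |x|)⁻¹ := by
    rw [← hshift.tsum_eq]
    apply tsum_of_norm_bounded hg
    intro i
    simp only [Function.comp]
    rw [Real.norm_eq_abs, abs_mul, abs_pow]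
    calc |tmCoeff Pm1 P0 x₀ ρ j (i+3)| * |x|^(i+3) ≤ 1 * |x|^(i+3) := by
          apply mul_le_mul_of_nonneg_right (hcb (i+3) (by omega)) (by positivity)
    _ = |x|^3 * |x|^i := by rw [one_mul, pow_add]; ring
  rw [Real.norm_eq_abs] at hbd
  have hinv : (1 - |x|)⁻¹ ≤ 5 := by
    rw [inv_le_comm₀ (by linarith) (by norm_num)]
    linarith
  calc |tmDelta Pm1 P0 x₀ ρ j x| ≤ |x|^3 * (1 - |x|)⁻¹ := hbd
  _ ≤ |x|^3 * 5 := by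
      apply mul_le_mul_of_nonneg_left hinv (by positivity)
  _ = 5 * |x|^3 := by ring

lemma sqrt2_facts : Real.sqrt 2 ^ 2 = 2 ∧ 1.414 ≤ Real.sqrt 2 ∧ Real.sqrt 2 ≤ 1.415 := by
  have h2 : Real.sqrt 2 ^ 2 = 2 := Real.sq_sqrt (by norm_num)
  have h0 : 0 ≤ Real.sqrt 2 := Real.sqrt_nonneg 2
  refine ⟨h2, by nlinarith, by nlinarith⟩

lemma cos_gap (t : ℝ) : |2 * Real.cos t - 2| ≤ t^2 := by
  have h1 := Real.one_sub_sq_div_two_le_cos (x := t)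
  have h2 := Real.cos_le_one t
  rw [abs_le]
  constructor <;> nlinarith

lemma abs_expand (a b d1 d2 : ℝ) :
    |a ^ 2 * d1 + (2 * a * d2 + d2 ^ 2) * (b + d1)|
      ≤ |a|^2 * |d1| + (2 * |a| * |d2| + |d2|^2) * (|b| + |d1|) := by
  have e1 : |2 * a * d2 + d2^2| ≤ 2 * |a| * |d2| + |d2|^2 := by
    calc |2 * a * d2 + d2^2| ≤ |2 * a * d2| + |d2^2| := abs_add_le _ _
    _ = 2 * |a| * |d2| + |d2|^2 := by rw [abs_mul, abs_mul, abs_two, abs_pow]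
  have e2 : |b + d1| ≤ |b| + |d1| := abs_add_le _ _
  calc |a ^ 2 * d1 + (2 * a * d2 + d2 ^ 2) * (b + d1)|
      ≤ |a ^ 2 * d1| + |(2 * a * d2 + d2 ^ 2) * (b + d1)| := abs_add_le _ _
  _ = |a|^2 * |d1| + |2 * a * d2 + d2 ^ 2| * |b + d1| := by
      rw [abs_mul, abs_mul, abs_pow]
  _ ≤ |a|^2 * |d1| + (2 * |a| * |d2| + |d2|^2) * (|b| + |d1|) := by
      have := mul_le_mul e1 e2 (abs_nonneg _) (by positivity)
      linarith

set_option maxHeartbeats 1000000 in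
lemma arith_inner (s A r D1 D2 B a : ℝ) (hsl : 1.414 ≤ s)
    (hsu : s ≤ 1.415) (hA0 : 0 < A) (hA1 : A ≤ 1) (hr0 : 0 ≤ r) (hr : r ≤ 0.7875)
    (hd1n : 0 ≤ D1) (hd2n : 0 ≤ D2) (hbn : 0 ≤ B) (han : 0 ≤ a) (ha : a ≤ 2)
    (hd1 : D1 ≤ 5 * A * (r^3/8)) (hd2 : D2 ≤ 5 * s * A * (r^3/64)) (hb : B ≤ r^2/4) :
    a^2 * D1 + (2 * a * D2 + D2^2) * (B + D1) ≤ 5 * s * (A * (1/2)) * r^3 := by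
  have hr3 : r^3 ≤ 0.489 := by
    calc r^3 ≤ 0.7875^3 := pow_le_pow_left₀ hr0 hr 3
    _ ≤ 0.489 := by norm_num
  have hr2 : r^2 ≤ 0.621 := by
    calc r^2 ≤ 0.7875^2 := pow_le_pow_left₀ hr0 hr 2
    _ ≤ 0.621 := by norm_num
  have hr3n : (0:ℝ) ≤ r^3 := by positivity
  have hAr : A * r^3 ≤ r^3 := by nlinarith
  have hu : A * r^3 ≤ 0.489 := by linarith
  have hun : (0:ℝ) ≤ A * r^3 := by positivity
  have ha2 : a^2 ≤ 4 := by nlinarith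
  have hbd1 : a^2 * D1 ≤ 2.5 * (A * r^3) := by
    nlinarith [mul_le_mul_of_nonneg_right ha2 hd1n]
  have hsA : s * (A * r^3) ≤ 1.415 * (A * r^3) :=
    mul_le_mul_of_nonneg_right hsu hun
  have hd2'' : D2 ≤ 0.111 * (A * r^3) := by linarith [hsA]
  have h2a : 2 * a * D2 ≤ 0.444 * (A * r^3) := by
    nlinarith [mul_le_mul_of_nonneg_right (show 2*a ≤ 4 by linarith) hd2n]
  have hsq : D2^2 ≤ 0.006 * (A * r^3) := by
    nlinarith [mul_le_mul hd2'' hd2'' hd2n (by positivity)]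
  have hbplus : B + D1 ≤ 0.462 := by linarith
  have hprod : (2 * a * D2 + D2^2) * (B + D1) ≤ (0.45 * (A * r^3)) * 0.462 := by
    apply mul_le_mul (by linarith) hbplus (by linarith) (by positivity)
  nlinarith [mul_le_mul_of_nonneg_right hsl hun]

set_option maxHeartbeats 1000000 in
lemma arith_outer (s A r D1 D2 B a : ℝ) (hsl : 1.414 ≤ s)
    (hsu : s ≤ 1.415) (hA0 : 0 < A) (hA1 : A ≤ 0.7073) (hr0 : 0 ≤ r) (hr : r ≤ 1.575)
    (hd1n : 0 ≤ D1) (hd2n : 0 ≤ D2) (hbn : 0 ≤ B) (han : 0 ≤ a) (ha : a ≤ 2)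
    (hd1 : D1 ≤ 5 * s * A * (r^3/8)) (hd2 : D2 ≤ 10 * A * (r^3/64)) (hb : B ≤ r^2/4) :
    a^2 * D1 + (2 * a * D2 + D2^2) * (B + D1) ≤ 6 * A * r^3 := by
  have hr3 : r^3 ≤ 3.91 := by
    calc r^3 ≤ 1.575^3 := pow_le_pow_left₀ hr0 hr 3
    _ ≤ 3.91 := by norm_num
  have hr2 : r^2 ≤ 2.481 := by
    calc r^2 ≤ 1.575^2 := pow_le_pow_left₀ hr0 hr 2
    _ ≤ 2.481 := by norm_num
  have hr3n : (0:ℝ) ≤ r^3 := by positivity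
  have hun : (0:ℝ) ≤ A * r^3 := by positivity
  have hu : A * r^3 ≤ 2.766 := by nlinarith
  have hsA : s * (A * r^3) ≤ 1.415 * (A * r^3) := mul_le_mul_of_nonneg_right hsu hun
  have hd1' : D1 ≤ 0.8844 * (A * r^3) := by linarith [hsA]
  have hd1'' : D1 ≤ 2.447 := by nlinarith
  have ha2 : a^2 ≤ 4 := by nlinarith
  have hbd1 : a^2 * D1 ≤ 3.5376 * (A * r^3) := by
    nlinarith [mul_le_mul_of_nonneg_right ha2 hd1n]
  have hd2' : D2 ≤ 0.15625 * (A * r^3) := by linarith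
  have hd2'' : D2 ≤ 0.4322 := by nlinarith
  have h2a : 2 * a * D2 ≤ 0.625 * (A * r^3) := by
    nlinarith [mul_le_mul_of_nonneg_right (show 2*a ≤ 4 by linarith) hd2n]
  have hsq : D2^2 ≤ 0.0676 * (A * r^3) := by
    nlinarith [mul_le_mul hd2' hd2'' hd2n (by positivity)]
  have hbplus : B + D1 ≤ 3.068 := by linarith
  have hprod : (2 * a * D2 + D2^2) * (B + D1) ≤ (0.6926 * (A * r^3)) * 3.068 := by
    apply mul_le_mul (by linarith) hbplus (by linarith) (by positivity)
  nlinarith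

set_option maxHeartbeats 1000000 in
lemma arith_step (s C M A r D1 D2 B a : ℝ) (hsl : 1.414 ≤ s) (hsu : s ≤ 1.415)
    (hC : 0 < C) (hM : 0 < M) (hA0 : 0 < A) (hA1 : A ≤ 1) (hr0 : 0 ≤ r) (hrM : r^3 ≤ M)
    (hd1n : 0 ≤ D1) (hd2n : 0 ≤ D2) (hbn : 0 ≤ B) (han : 0 ≤ a) (ha : a ≤ 2) (hb : B ≤ 4)
    (hd1 : D1 ≤ C * s * A * (r^3/8)) (hd2 : D2 ≤ 2 * C * A * (r^3/64)) :
    a^2 * D1 + (2 * a * D2 + D2^2) * (B + D1)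
      ≤ (C * (1 + (1 + C*M) * (4 + C*M))) * A * r^3 := by
  have hr3n : (0:ℝ) ≤ r^3 := by positivity
  have hun : (0:ℝ) ≤ A * r^3 := by positivity
  have huM : A * r^3 ≤ M := by nlinarith
  have hsA : s * (A * r^3) ≤ 1.415 * (A * r^3) := mul_le_mul_of_nonneg_right hsu hun
  have hd1' : D1 ≤ C * (A * r^3) := by
    nlinarith [mul_le_mul_of_nonneg_left hsA (le_of_lt hC)]
  have hd1M : D1 ≤ C * M := by nlinarith
  have ha2 : a^2 ≤ 4 := by nlinarith
  have hbd1 : a^2 * D1 ≤ 4 * (C * (A * r^3)) := by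
    nlinarith [mul_le_mul_of_nonneg_right ha2 hd1n]
  have hd2' : D2 ≤ C * (A * r^3) / 8 := by nlinarith
  have h2a : 2 * a * D2 ≤ C * (A * r^3) / 2 := by
    nlinarith [mul_le_mul_of_nonneg_right (show 2*a ≤ 4 by linarith) hd2n]
  have hd2M : D2 ≤ C * M := by nlinarith
  have hsq : D2^2 ≤ (C * (A * r^3)) * (C * M) := by
    nlinarith [mul_le_mul hd2' hd2M hd2n (by positivity)]
  have hsum2 : 2 * a * D2 + D2^2 ≤ (C * (A * r^3)) * (1 + C * M) := by nlinarith
  have hbplus : B + D1 ≤ 4 + C * M := by linarith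
  have hprod : (2 * a * D2 + D2^2) * (B + D1)
      ≤ ((C * (A * r^3)) * (1 + C * M)) * (4 + C * M) := by
    apply mul_le_mul hsum2 hbplus (by linarith) (by positivity)
  nlinarith

lemma inner_bound (Pm1 P0 : Polynomial ℝ) (x₀ ρ : ℝ)
    (hreg : IsRegularGermAt Pm1 P0 1 1 ρ x₀) :
    ∀ j : ℕ, ∀ x : ℝ, |x| ≤ Real.pi/4 →
      |tmDelta Pm1 P0 x₀ ρ j x| ≤ 5 * Real.sqrt 2 * (1 / Real.sqrt 2)^j * |x|^3 := by
  obtain ⟨hs2, hsl, hsu⟩ := sqrt2_facts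
  have hs0 : (0:ℝ) < Real.sqrt 2 := by linarith
  set s := Real.sqrt 2 with hs
  intro j
  induction j using Nat.strong_induction_on with
  | _ j ih =>
    match j with
    | 0 =>
      intro x hx
      have := base_bound Pm1 P0 x₀ ρ hreg 0 (by norm_num) x hx
      have h1 : (5:ℝ) * |x|^3 ≤ 5 * s * (1/s)^0 * |x|^3 := by
        rw [pow_zero]
        nlinarith [pow_nonneg (abs_nonneg x) 3]
      linarith
    | 1 =>
      intro x hx
      have := base_bound Pm1 P0 x₀ ρ hreg 1 (by norm_num) x hx
      have h1 : (5:ℝ) * s * (1/s)^1 * |x|^3 = 5 * |x|^3 := by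
        field_simp
      linarith [h1.ge, this]
    | (j+2) =>
      intro x hx
      have hpi : Real.pi ≤ 3.15 := Real.pi_lt_d2.le
      have hrpos : (0:ℝ) ≤ |x| := abs_nonneg x
      have hr : |x| ≤ 0.7875 := by linarith [hx]
      have hx2 : |x/2| ≤ Real.pi/4 := by
        rw [abs_div]
        simp only [abs_two]
        linarith [hx, abs_nonneg x]
      have hx4 : |x/4| ≤ Real.pi/4 := by
        rw [abs_div]
        have h4 : |(4:ℝ)| = 4 := by norm_num
        rw [h4]
        linarith [hx, abs_nonneg x]
      have hd1 := ih (j+1) (by omega) (x/2) hx2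
      have hd2 := ih j (by omega) (x/4) hx4
      set d1 := tmDelta Pm1 P0 x₀ ρ (j+1) (x/2) with hD1
      set d2 := tmDelta Pm1 P0 x₀ ρ j (x/4) with hD2
      set A := (1/s)^j with hA
      have hA0 : 0 < A := by positivity
      have hA1 : A ≤ 1 := by
        apply pow_le_one₀ (by positivity)
        rw [div_le_one hs0]; linarith
      have hinv2 : (1/s)^2 = 1/2 := by
        rw [div_pow, hs2]; norm_num
      have hp1 : (1/s)^(j+1) = A * (1/s) := by rw [hA, pow_succ]
      have hp2 : (1/s)^(j+2) = A * (1/2) := by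
        rw [hA, pow_add, hinv2]
      have habs2 : |x/2|^3 = |x|^3/8 := by
        rw [abs_div, abs_two]; ring
      have habs4 : |x/4|^3 = |x|^3/64 := by
        rw [abs_div, show |(4:ℝ)| = 4 by norm_num]; ring
      rw [hp1, habs2] at hd1
      rw [habs4] at hd2
      have hd1' : |d1| ≤ 5 * A * (|x|^3/8) := by
        have he : 5 * s * (A * (1/s)) = 5 * A := by field_simp
        calc |d1| ≤ 5 * s * (A * (1/s)) * (|x|^3/8) := hd1
        _ = 5 * A * (|x|^3/8) := by rw [he]
      have hb' : |2 * Real.cos (x/2) - 2| ≤ |x|^2/4 := by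
        calc |2 * Real.cos (x/2) - 2| ≤ (x/2)^2 := cos_gap (x/2)
        _ = x^2/4 := by ring
        _ = |x|^2/4 := by rw [sq_abs]
      have ha : |2 * Real.cos (x/4)| ≤ 2 := by
        rw [abs_mul, abs_two]
        have := Real.abs_cos_le_one (x/4)
        linarith
      rw [tmDelta_rec Pm1 P0 x₀ ρ j x, ← hD1, ← hD2]
      have key := abs_expand (2 * Real.cos (x/4)) (2 * Real.cos (x/2) - 2) d1 d2
      have goal' := arith_inner s A |x| |d1| |d2| |2 * Real.cos (x/2) - 2|
        |2 * Real.cos (x/4)| hsl hsu hA0 hA1 hrpos hr (abs_nonneg _) (abs_nonneg _)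
        (abs_nonneg _) (abs_nonneg _) ha hd1' hd2 hb'
      calc |(2 * Real.cos (x/4)) ^ 2 * d1 +
            (2 * (2 * Real.cos (x/4)) * d2 + d2 ^ 2) * ((2 * Real.cos (x/2) - 2) + d1)|
          ≤ |2 * Real.cos (x/4)|^2 * |d1| +
            (2 * |2 * Real.cos (x/4)| * |d2| + |d2|^2) *
              (|2 * Real.cos (x/2) - 2| + |d1|) := key
      _ ≤ 5 * s * (A * (1/2)) * |x|^3 := goal'
      _ = 5 * s * (1/s)^(j+2) * |x|^3 := by rw [hp2]

lemma zero_bound (Pm1 P0 : Polynomial ℝ) (x₀ ρ : ℝ)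
    (hreg : IsRegularGermAt Pm1 P0 1 1 ρ x₀) (k : ℕ) (hk : 1 ≤ k)
    (x : ℝ) (hx : |x| ≤ Real.pi/2) :
    |tmDelta Pm1 P0 x₀ ρ (k+1) x| ≤ 6 * (1 / Real.sqrt 2)^k * |x|^3 := by
  obtain ⟨hs2, hsl, hsu⟩ := sqrt2_facts
  have hs0 : (0:ℝ) < Real.sqrt 2 := by linarith
  set s := Real.sqrt 2 with hs
  obtain ⟨j, rfl⟩ : ∃ j, k = j + 1 := ⟨k - 1, by omega⟩
  have hpi : Real.pi ≤ 3.15 := Real.pi_lt_d2.le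
  have hrpos : (0:ℝ) ≤ |x| := abs_nonneg x
  have hr : |x| ≤ 1.575 := by linarith
  have hx2 : |x/2| ≤ Real.pi/4 := by
    rw [abs_div, abs_two]
    linarith
  have hx4 : |x/4| ≤ Real.pi/4 := by
    rw [abs_div, show |(4:ℝ)| = 4 by norm_num]
    linarith
  have hd1 := inner_bound Pm1 P0 x₀ ρ hreg (j+1) (x/2) hx2
  have hd2 := inner_bound Pm1 P0 x₀ ρ hreg j (x/4) hx4
  set d1 := tmDelta Pm1 P0 x₀ ρ (j+1) (x/2) with hD1
  set d2 := tmDelta Pm1 P0 x₀ ρ j (x/4) with hD2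
  set A := (1/s)^(j+1) with hA
  have hA0 : 0 < A := by positivity
  have hs1 : (1:ℝ)/s ≤ 0.7073 := by
    rw [div_le_iff₀ hs0]
    nlinarith
  have hA1 : A ≤ 0.7073 := by
    calc A ≤ (1/s)^1 := by
          apply pow_le_pow_of_le_one (by positivity) _ (by omega)
          rw [div_le_one hs0]; linarith
    _ = 1/s := pow_one _
    _ ≤ 0.7073 := hs1
  have habs2 : |x/2|^3 = |x|^3/8 := by
    rw [abs_div, abs_two]; ring
  have habs4 : |x/4|^3 = |x|^3/64 := by
    rw [abs_div, show |(4:ℝ)| = 4 by norm_num]; ring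
  rw [habs2] at hd1
  rw [habs4] at hd2
  have hd1' : |d1| ≤ 5 * s * A * (|x|^3/8) := hd1
  have hd2' : |d2| ≤ 10 * A * (|x|^3/64) := by
    have he : (1/s : ℝ)^j = s * A := by
      rw [hA, pow_succ]
      field_simp
    rw [he] at hd2
    calc |d2| ≤ 5 * s * (s * A) * (|x|^3/64) := hd2
    _ = 5 * s^2 * A * (|x|^3/64) := by ring
    _ = 10 * A * (|x|^3/64) := by rw [hs2]; ring
  have hb' : |2 * Real.cos (x/2) - 2| ≤ |x|^2/4 := by
    calc |2 * Real.cos (x/2) - 2| ≤ (x/2)^2 := cos_gap (x/2)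
    _ = x^2/4 := by ring
    _ = |x|^2/4 := by rw [sq_abs]
  have ha : |2 * Real.cos (x/4)| ≤ 2 := by
    rw [abs_mul, abs_two]
    have := Real.abs_cos_le_one (x/4)
    linarith
  rw [show j + 1 + 1 = j + 2 from rfl, tmDelta_rec Pm1 P0 x₀ ρ j x, ← hD1, ← hD2]
  have key := abs_expand (2 * Real.cos (x/4)) (2 * Real.cos (x/2) - 2) d1 d2
  have goal' := arith_outer s A |x| |d1| |d2| |2 * Real.cos (x/2) - 2|
    |2 * Real.cos (x/4)| hsl hsu hA0 hA1 hrpos hr (abs_nonneg _) (abs_nonneg _)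
    (abs_nonneg _) (abs_nonneg _) ha hd1' hd2' hb'
  calc |(2 * Real.cos (x/4)) ^ 2 * d1 +
        (2 * (2 * Real.cos (x/4)) * d2 + d2 ^ 2) * ((2 * Real.cos (x/2) - 2) + d1)|
      ≤ |2 * Real.cos (x/4)|^2 * |d1| +
        (2 * |2 * Real.cos (x/4)| * |d2| + |d2|^2) *
          (|2 * Real.cos (x/2) - 2| + |d1|) := key
  _ ≤ 6 * A * |x|^3 := goal'
  _ = 6 * (1/s)^(j+1) * |x|^3 := by rw [hA]

lemma main_bound (m : ℕ) :
    ∃ Ct : ℝ, 0 < Ct ∧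
      ∀ (Pm1 P0 : Polynomial ℝ) (x₀ ρ : ℝ), IsRegularGermAt Pm1 P0 1 1 ρ x₀ →
        ∀ k : ℕ, 2 * m + 1 ≤ k → ∀ x : ℝ, |x| ≤ (2 : ℝ) ^ ((m : ℤ) - 1) * Real.pi →
          |tmDelta Pm1 P0 x₀ ρ (k+1) x| ≤ Ct * (1 / Real.sqrt 2)^k * |x|^3 := by
  induction m with
  | zero =>
    refine ⟨6, by norm_num, ?_⟩
    intro Pm1 P0 x₀ ρ hreg k hk x hx
    have hdom : (2 : ℝ) ^ ((0 : ℤ) - 1) * Real.pi = Real.pi/2 := by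
      norm_num
      ring
    apply zero_bound Pm1 P0 x₀ ρ hreg k (by omega) x
    rw [← hdom]
    exact_mod_cast hx
  | succ m ihm =>
    obtain ⟨C, hC, hbd⟩ := ihm
    obtain ⟨hs2, hsl, hsu⟩ := sqrt2_facts
    have hs0 : (0:ℝ) < Real.sqrt 2 := by linarith
    set s := Real.sqrt 2 with hs
    set M := ((2 : ℝ) ^ (m : ℤ) * Real.pi)^3 with hM
    have hMpos : 0 < M := by
      apply pow_pos
      positivity
    refine ⟨C * (1 + (1 + C*M) * (4 + C*M)), by positivity, ?_⟩
    intro Pm1 P0 x₀ ρ hreg k hk x hx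
    obtain ⟨l, rfl⟩ : ∃ l, k = l + 2 := ⟨k - 2, by omega⟩
    have hl : 2 * m + 1 ≤ l := by omega
    have hdom : (2 : ℝ) ^ (((m:ℕ)+1 : ℤ) - 1) * Real.pi = 2 ^ (m : ℤ) * Real.pi := by
      norm_num
    have hx' : |x| ≤ (2:ℝ) ^ (m : ℤ) * Real.pi := by
      rw [← hdom]
      have : (((m+1 : ℕ) : ℤ) - 1) = ((m:ℕ)+1 : ℤ) - 1 := by push_cast; ring
      rw [← this]
      exact hx
    have hhalf : (2:ℝ) ^ (m : ℤ) = 2 * 2 ^ ((m:ℤ) - 1) := by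
      rw [show (m:ℤ) = ((m:ℤ) - 1) + 1 by ring, zpow_add₀ (by norm_num : (2:ℝ) ≠ 0)]
      ring
    have hx2 : |x/2| ≤ (2:ℝ) ^ ((m:ℤ) - 1) * Real.pi := by
      rw [abs_div, abs_two, div_le_iff₀ (by norm_num : (0:ℝ) < 2)]
      calc |x| ≤ (2:ℝ) ^ (m : ℤ) * Real.pi := hx'
      _ = 2 ^ ((m:ℤ) - 1) * Real.pi * 2 := by rw [hhalf]; ring
    have hx4 : |x/4| ≤ (2:ℝ) ^ ((m:ℤ) - 1) * Real.pi := by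
      rw [abs_div, show |(4:ℝ)| = 4 by norm_num, div_le_iff₀ (by norm_num : (0:ℝ) < 4)]
      calc |x| ≤ (2:ℝ) ^ (m : ℤ) * Real.pi := hx'
      _ ≤ (2:ℝ) ^ ((m:ℤ) - 1) * Real.pi * 4 := by
          rw [hhalf]
          nlinarith [Real.pi_pos, zpow_pos (by norm_num : (0:ℝ) < 2) ((m:ℤ) - 1)]
    have hd1 := hbd Pm1 P0 x₀ ρ hreg (l+1) (by omega) (x/2) hx2
    have hd2 := hbd Pm1 P0 x₀ ρ hreg l (by omega) (x/4) hx4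
    set d1 := tmDelta Pm1 P0 x₀ ρ (l+1+1) (x/2) with hD1
    set d2 := tmDelta Pm1 P0 x₀ ρ (l+1) (x/4) with hD2
    set A := (1/s)^(l+2) with hA
    have hA0 : 0 < A := by positivity
    have hA1 : A ≤ 1 := by
      apply pow_le_one₀ (by positivity)
      rw [div_le_one hs0]; linarith
    have hinv2 : (1/s)^2 = 1/2 := by rw [div_pow, hs2]; norm_num
    have hp1 : (1/s : ℝ)^(l+1) = A * s := by
      rw [hA, show l + 2 = (l+1) + 1 by ring, pow_succ (1/s) (l+1), mul_assoc,
        one_div_mul_cancel hs0.ne', mul_one]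
    have hp0 : (1/s : ℝ)^l = 2 * A := by
      have : (1/s : ℝ)^(l+2) = (1/s)^l * (1/s)^2 := by rw [pow_add]
      rw [hinv2] at this
      rw [hA, this]
      ring
    have habs2 : |x/2|^3 = |x|^3/8 := by rw [abs_div, abs_two]; ring
    have habs4 : |x/4|^3 = |x|^3/64 := by
      rw [abs_div, show |(4:ℝ)| = 4 by norm_num]; ring
    rw [hp1, habs2] at hd1
    rw [hp0, habs4] at hd2
    have hd1' : |d1| ≤ C * s * A * (|x|^3/8) := by
      calc |d1| ≤ C * (A * s) * (|x|^3/8) := hd1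
      _ = C * s * A * (|x|^3/8) := by ring
    have hd2' : |d2| ≤ 2 * C * A * (|x|^3/64) := by
      calc |d2| ≤ C * (2 * A) * (|x|^3/64) := hd2
      _ = 2 * C * A * (|x|^3/64) := by ring
    have hb4 : |2 * Real.cos (x/2) - 2| ≤ 4 := by
      have h1 := Real.abs_cos_le_one (x/2)
      rw [abs_le] at h1 ⊢
      constructor <;> nlinarith [h1.1, h1.2]
    have ha : |2 * Real.cos (x/4)| ≤ 2 := by
      rw [abs_mul, abs_two]
      have := Real.abs_cos_le_one (x/4)
      linarith
    have hrM : |x|^3 ≤ M := by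
      rw [hM]
      apply pow_le_pow_left₀ (abs_nonneg x) hx'
    rw [show l + 2 + 1 = (l+1) + 2 from rfl, tmDelta_rec Pm1 P0 x₀ ρ (l+1) x,
      ← hD1, ← hD2]
    have key := abs_expand (2 * Real.cos (x/4)) (2 * Real.cos (x/2) - 2) d1 d2
    have goal' := arith_step s C M A |x| |d1| |d2| |2 * Real.cos (x/2) - 2|
      |2 * Real.cos (x/4)| hsl hsu hC hMpos hA0 hA1 (abs_nonneg x) hrM
      (abs_nonneg _) (abs_nonneg _) (abs_nonneg _) (abs_nonneg _) ha hb4 hd1' hd2'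
    calc |(2 * Real.cos (x/4)) ^ 2 * d1 +
          (2 * (2 * Real.cos (x/4)) * d2 + d2 ^ 2) * ((2 * Real.cos (x/2) - 2) + d1)|
        ≤ |2 * Real.cos (x/4)|^2 * |d1| +
          (2 * |2 * Real.cos (x/4)| * |d2| + |d2|^2) *
            (|2 * Real.cos (x/2) - 2| + |d1|) := key
    _ ≤ (C * (1 + (1 + C*M) * (4 + C*M))) * A * |x|^3 := goal'
    _ = (C * (1 + (1 + C*M) * (4 + C*M))) * (1/s)^(l+2) * |x|^3 := by rw [hA]

theorem thueMorse_exp_convergence (m : ℕ) :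
    ∃ Ct Cm : ℝ, 0 < Ct ∧ 0 < Cm ∧
      ∀ (Pm1 P0 : Polynomial ℝ) (x₀ ρ : ℝ),
        IsRegularGermAt Pm1 P0 1 1 ρ x₀ →
        ∀ k : ℕ, 2 * m + 1 ≤ k →
          ∀ x ∈ Set.Icc (-((2 : ℝ) ^ ((m : ℤ) - 1) * Real.pi))
              ((2 : ℝ) ^ ((m : ℤ) - 1) * Real.pi),
            |tmDelta Pm1 P0 x₀ ρ (k + 1) x| ≤ Ct * (1 / Real.sqrt 2) ^ k * |x| ^ 3 ∧
            Ct * (1 / Real.sqrt 2) ^ k * |x| ^ 3 ≤ Cm * (1 / Real.sqrt 2) ^ k := by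
  obtain ⟨Ct, hCt, hbd⟩ := main_bound m
  set D := (2 : ℝ) ^ ((m : ℤ) - 1) * Real.pi with hD
  have hDpos : 0 < D := by
    apply mul_pos (zpow_pos (by norm_num : (0:ℝ) < 2) _) Real.pi_pos
  refine ⟨Ct, Ct * D^3, hCt, by positivity, ?_⟩
  intro Pm1 P0 x₀ ρ hreg k hk x hx
  obtain ⟨hx1, hx2⟩ := hx
  have hxD : |x| ≤ D := abs_le.mpr ⟨by linarith, hx2⟩
  constructor
  · exact hbd Pm1 P0 x₀ ρ hreg k hk x hxD
  · have hpow : (0:ℝ) < (1 / Real.sqrt 2) ^ k := by positivity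
    have hx3 : |x|^3 ≤ D^3 := pow_le_pow_left₀ (abs_nonneg x) hxD 3
    calc Ct * (1 / Real.sqrt 2) ^ k * |x| ^ 3
        ≤ Ct * (1 / Real.sqrt 2) ^ k * D ^ 3 := by
          apply mul_le_mul_of_nonneg_left hx3 (by positivity)
    _ = Ct * D^3 * (1 / Real.sqrt 2) ^ k := by ring
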